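/- arXiv:1001.3513 — 5 statements merged into one kernel-verified Lean document; each statement's English description precedes it below -/
import Mathlib

section
/- For all n ≥ 1, the set A_n of inflated random Fibonacci words is closed under word reversal, i.e., A_n = {reverse(x) : x ∈ A_n}. -/
/-- Sets of inflated random Fibonacci words: A₁ = {0}, A₂ = {1},
    Aₙ = Aₙ₋₁Aₙ₋₂ ∪ Aₙ₋₂Aₙ₋₁ for n ≥ 3 (A₀ = ∅). -/
def wordSet : ℕ → Set (List Bool)
  | 0 => ∅
  | 1 => {[false]}
  | 2 => {[true]}
  | (n + 3) => Set.image2 (· ++ ·) (wordSet (n + 2)) (wordSet (n + 1)) ∪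
      Set.image2 (· ++ ·) (wordSet (n + 1)) (wordSet (n + 2))

/-- Concatenation of sets of words: UV = {uv : u ∈ U, v ∈ V}. -/
def cat (U V : Set (List Bool)) : Set (List Bool) := Set.image2 (· ++ ·) U V

/-- W[a,b]: the set of segments wₐ…w_b (1-based indexing) of words in W. -/
def seg (W : Set (List Bool)) (a b : ℕ) : Set (List Bool) :=
  (fun w => (w.drop (a - 1)).take (b - a + 1)) '' W

/-- F(S, m): the set of all contiguous factors of length m of words in S. -/
def factorSet (S : Set (List Bool)) (m : ℕ) : Set (List Bool) :=
  {x | x.length = m ∧ ∃ w ∈ S, x <:+: w}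

/-- Fₙ: the set of factors of length fₙ occurring in any inflated word. -/
def Fn (n : ℕ) : Set (List Bool) := ⋃ m ≥ 1, factorSet (wordSet m) (Nat.fib n)
lemma rev_cat (U V : Set (List Bool)) :
    (fun x : List Bool => x.reverse) '' Set.image2 (· ++ ·) U V =
      Set.image2 (· ++ ·) ((fun x : List Bool => x.reverse) '' V)
        ((fun x : List Bool => x.reverse) '' U) := by
  rw [Set.image_image2, Set.image2_image_left, Set.image2_image_right, Set.image2_swap]
  simp

lemma wordSet_rev (n : ℕ) : wordSet n = (fun x : List Bool => x.reverse) '' wordSet n := by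
  induction n using Nat.strong_induction_on with
  | _ n ih =>
    match n with
    | 0 => simp [wordSet]
    | 1 => simp [wordSet]
    | 2 => simp [wordSet]
    | (n+3) =>
      have h1 := ih (n+1) (by omega)
      have h2 := ih (n+2) (by omega)
      rw [wordSet, Set.image_union, rev_cat, rev_cat, ← h1, ← h2, Set.union_comm]

theorem stmt0 (n : ℕ) (hn : 1 ≤ n) :
    wordSet n = (fun x : List Bool => x.reverse) '' wordSet n := wordSet_rev n
end

section
/- For all n ≥ 3, the cardinalities satisfy |A_n| = 2|A_{n-1}||A_{n-2}| − |A_{n-2}|²|A_{n-3}|, with |A_0| = 0, |A_1| = |A_2| = 1. -/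
lemma length_of_mem : ∀ n, ∀ w ∈ wordSet n, w.length = Nat.fib n := by
  intro n
  induction n using Nat.strong_induction_on with
  | _ n ih =>
    match n with
    | 0 => intro w hw; simp [wordSet] at hw
    | 1 => intro w hw; simp only [wordSet, Set.mem_singleton_iff] at hw; subst hw; rfl
    | 2 => intro w hw; simp only [wordSet, Set.mem_singleton_iff] at hw; subst hw; rfl
    | (m+3) =>
      intro w hw
      rcases hw with h | h <;> rcases h with ⟨u, hu, v, hv, rfl⟩ <;>
        rw [List.length_append, ih _ (by omega) _ hu, ih _ (by omega) _ hv,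
          show Nat.fib (m+3) = Nat.fib (m+1) + Nat.fib (m+2) from Nat.fib_add_two] <;> omega

lemma finite_wordSet : ∀ n, (wordSet n).Finite := by
  intro n
  induction n using Nat.strong_induction_on with
  | _ n ih =>
    match n with
    | 0 => simp [wordSet]
    | 1 => exact Set.finite_singleton _
    | 2 => exact Set.finite_singleton _
    | (m+3) =>
      exact Set.Finite.union
        (Set.Finite.image2 _ (ih _ (by omega)) (ih _ (by omega)))
        (Set.Finite.image2 _ (ih _ (by omega)) (ih _ (by omega)))

lemma mem_cat {U V : Set (List Bool)} {u v : List Bool} (hu : u ∈ U) (hv : v ∈ V) :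
    u ++ v ∈ cat U V := Set.mem_image2_of_mem hu hv

lemma cat_left (m : ℕ) {u v : List Bool} (hu : u ∈ wordSet (m+2)) (hv : v ∈ wordSet (m+1)) :
    u ++ v ∈ wordSet (m+3) := Or.inl (Set.mem_image2_of_mem hu hv)

lemma cat_right (m : ℕ) {u v : List Bool} (hu : u ∈ wordSet (m+1)) (hv : v ∈ wordSet (m+2)) :
    u ++ v ∈ wordSet (m+3) := Or.inr (Set.mem_image2_of_mem hu hv)

/-- eq of prefix with given length -/
lemma prefix_eq_of_length {p u v : List Bool} (h : p <+: u ++ v) (hl : p.length = u.length) :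
    p = u ∧ (u ++ v).drop p.length = v := by
  obtain ⟨t, ht⟩ := h
  obtain ⟨h1, h2⟩ := List.append_inj ht hl
  subst h1
  exact ⟨rfl, by rw [hl, List.drop_left]⟩

/-- The mutual synchronization lemma. -/
lemma sync : ∀ k : ℕ,
    (∀ w ∈ wordSet (k+2), ∀ p ∈ wordSet (k+1), p <+: w →
      w.drop (Nat.fib (k+1)) ∈ wordSet k) ∧
    (∀ w ∈ wordSet (k+2), ∀ p ∈ wordSet k, p <+: w →
      w.drop (Nat.fib k) ∈ wordSet (k+1)) := by
  intro k
  induction k using Nat.strong_induction_on with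
  | _ k ih =>
    match k with
    | 0 =>
      constructor
      · intro w hw p hp hpre
        simp only [wordSet, Set.mem_singleton_iff] at hw hp
        subst hw; subst hp
        rcases hpre with ⟨t, ht⟩; simp at ht
      · intro w hw p hp hpre
        simp [wordSet] at hp
    | 1 =>
      constructor
      · -- w ∈ A₃, p ∈ A₂ = {[true]}
        intro w hw p hp hpre
        simp only [wordSet, Set.mem_singleton_iff] at hp; subst hp
        rcases hw with h | h <;> rcases h with ⟨u, hu, v, hv, rfl⟩
        · -- u ∈ A₂ = {[true]}, v ∈ A₁
          simp only [wordSet, Set.mem_singleton_iff] at hu; subst hu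
          simpa using hv
        · -- u ∈ A₁ = {[false]}, contradiction
          simp only [wordSet, Set.mem_singleton_iff] at hu; subst hu
          rcases hpre with ⟨t, ht⟩; simp at ht
      · -- w ∈ A₃, p ∈ A₁ = {[false]}
        intro w hw p hp hpre
        simp only [wordSet, Set.mem_singleton_iff] at hp; subst hp
        rcases hw with h | h <;> rcases h with ⟨u, hu, v, hv, rfl⟩
        · simp only [wordSet, Set.mem_singleton_iff] at hu; subst hu
          rcases hpre with ⟨t, ht⟩; simp at ht
        · simp only [wordSet, Set.mem_singleton_iff] at hu; subst hu
          simpa using hv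
    | (k+2) =>
      have ih0 := ih k (by omega)
      have ih1 := ih (k+1) (by omega)
      have fib4 : Nat.fib (k+4) = Nat.fib (k+2) + Nat.fib (k+3) := Nat.fib_add_two
      have fib3 : Nat.fib (k+3) = Nat.fib (k+1) + Nat.fib (k+2) := Nat.fib_add_two
      have fib2 : Nat.fib (k+2) = Nat.fib k + Nat.fib (k+1) := Nat.fib_add_two
      constructor
      · -- part 1: w ∈ A_{k+4}, p ∈ A_{k+3}
        intro w hw p hp hpre
        rcases hw with h | h <;> rcases h with ⟨u, hu, v, hv, rfl⟩
        · -- u ∈ A_{k+3}, v ∈ A_{k+2}, |p| = |u|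
          have hl : p.length = u.length := by
            rw [length_of_mem _ _ hp, length_of_mem _ _ hu]
          obtain ⟨_, h3⟩ := prefix_eq_of_length hpre hl
          rw [length_of_mem _ _ hp] at h3
          rw [h3]; exact hv
        · -- u ∈ A_{k+2}, v ∈ A_{k+3}
          have hvlen := length_of_mem _ _ hv
          have hulen := length_of_mem _ _ hu
          have hdrop : (u ++ v).drop (Nat.fib (k+3)) = v.drop (Nat.fib (k+1)) := by
            rw [fib3, ← hulen, Nat.add_comm, ← List.drop_drop, List.drop_left]
          rw [hdrop]
          rcases hp with h | h <;> rcases h with ⟨p1, hp1, p2, hp2, rfl⟩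
          · -- p1 ∈ A_{k+2}, p2 ∈ A_{k+1}
            have hl : p1.length = u.length := by
              rw [length_of_mem _ _ hp1, hulen]
            obtain ⟨t, ht⟩ := hpre
            rw [List.append_assoc] at ht
            obtain ⟨h1, h2⟩ := List.append_inj ht hl
            have hp2v : p2 <+: v := ⟨t, h2⟩
            exact (ih1.2 v hv p2 hp2 hp2v)
          · -- p1 ∈ A_{k+1}, p2 ∈ A_{k+2}
            have hp1u : p1 <+: u := by
              apply List.prefix_of_prefix_length_le
                ((List.prefix_append p1 p2).trans hpre) (List.prefix_append u v)
              rw [length_of_mem _ _ hp1, hulen, fib2]; omega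
            have hz : u.drop (Nat.fib (k+1)) ∈ wordSet k := ih0.1 u hu p1 hp1 hp1u
            set z := u.drop (Nat.fib (k+1)) with hzdef
            have huz : u = p1 ++ z := by
              obtain ⟨s, hs⟩ := hp1u
              rw [hzdef, ← hs, List.drop_left' (by rw [length_of_mem _ _ hp1])]
            -- z ++ v = p2 ++ t
            obtain ⟨t, ht⟩ := hpre
            simp only at ht
            rw [huz, List.append_assoc, List.append_assoc] at ht
            have hz_v : z ++ v = p2 ++ t := (List.append_cancel_left ht).symm
            have hzp2 : z <+: p2 := by
              apply List.prefix_of_prefix_length_le ⟨v, rfl⟩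
                (hz_v ▸ List.prefix_append p2 t)
              rw [length_of_mem _ _ hz, length_of_mem _ _ hp2]
              have := Nat.fib_le_fib_succ (n := k)
              have := Nat.fib_le_fib_succ (n := k+1)
              omega
            have hy : p2.drop (Nat.fib k) ∈ wordSet (k+1) := ih0.2 p2 hp2 z hz hzp2
            set y := p2.drop (Nat.fib k) with hydef
            have hp2zy : p2 = z ++ y := by
              obtain ⟨s, hs⟩ := hzp2
              rw [hydef, ← hs, List.drop_left' (by rw [length_of_mem _ _ hz])]
            have hyv : y <+: v := by
              rw [hp2zy, List.append_assoc] at hz_v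
              have := List.append_cancel_left hz_v
              exact ⟨t, this.symm⟩
            exact ih1.2 v hv y hy hyv
      · -- part 2: w ∈ A_{k+4}, p ∈ A_{k+2}
        intro w hw p hp hpre
        rcases hw with h | h <;> rcases h with ⟨u, hu, v, hv, rfl⟩
        · -- u ∈ A_{k+3}, v ∈ A_{k+2} : p <+: u
          have hpu : p <+: u := by
            apply List.prefix_of_prefix_length_le hpre (List.prefix_append u v)
            rw [length_of_mem _ _ hp, length_of_mem _ _ hu, fib3]; omega
          have hz : u.drop (Nat.fib (k+2)) ∈ wordSet (k+1) := ih1.1 u hu p hp hpu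
          have hdrop : (u ++ v).drop (Nat.fib (k+2)) =
              u.drop (Nat.fib (k+2)) ++ v := by
            apply List.drop_append_of_le_length
            rw [length_of_mem _ _ hu, fib3]; omega
          rw [hdrop]
          exact cat_right k hz hv
        · -- u ∈ A_{k+2} : p = u, drop = v
          have hl : p.length = u.length := by
            rw [length_of_mem _ _ hp, length_of_mem _ _ hu]
          obtain ⟨_, h3⟩ := prefix_eq_of_length hpre hl
          rw [length_of_mem _ _ hp] at h3
          rw [h3]; exact hv

/-- The intersection identity. -/
lemma inter_eq (m : ℕ) :
    cat (wordSet (m+2)) (wordSet (m+1)) ∩ cat (wordSet (m+1)) (wordSet (m+2)) =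
      cat (cat (wordSet (m+1)) (wordSet m)) (wordSet (m+1)) := by
  ext x
  constructor
  · rintro ⟨⟨u, hu, v, hv, rfl⟩, ⟨u', hu', v', hv', hx⟩⟩
    have hpre : u' <+: u := by
      apply List.prefix_of_prefix_length_le ⟨v', hx⟩ (List.prefix_append u v)
      rw [length_of_mem _ _ hu', length_of_mem _ _ hu]
      exact Nat.fib_le_fib_succ
    have hz : u.drop (Nat.fib (m+1)) ∈ wordSet m := (sync m).1 u hu u' hu' hpre
    have huz : u = u' ++ u.drop (Nat.fib (m+1)) := by
      obtain ⟨s, hs⟩ := hpre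
      rw [← hs, List.drop_left' (by rw [length_of_mem _ _ hu'])]
    rw [huz]
    exact mem_cat (mem_cat hu' hz) hv
  · rintro ⟨uz, ⟨u', hu', z, hz, rfl⟩, v, hv, rfl⟩
    match m, hz with
    | (m+1), hz =>
      show (u' ++ z) ++ v ∈ _ ∩ _
      constructor
      · exact mem_cat (cat_left m hu' hz) hv
      · rw [List.append_assoc]
        exact mem_cat hu' (cat_right m hz hv)

lemma ncard_cat (U V : Set (List Bool)) (hU : U.Finite) (hV : V.Finite) (L : ℕ)
    (hlen : ∀ u ∈ U, u.length = L) :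
    (cat U V).ncard = U.ncard * V.ncard := by
  have himg : cat U V = (fun p : List Bool × List Bool => p.1 ++ p.2) '' (U ×ˢ V) :=
    (Set.image_prod _).symm
  rw [himg, Set.ncard_image_of_injOn, ← Nat.card_coe_set_eq,
    Nat.card_congr (Equiv.Set.prod U V), Nat.card_prod, Nat.card_coe_set_eq,
    Nat.card_coe_set_eq]
  rintro ⟨u, v⟩ ⟨hu, hv⟩ ⟨u', v'⟩ ⟨hu', hv'⟩ h
  simp only at h
  obtain ⟨h1, h2⟩ := List.append_inj h (by rw [hlen _ hu, hlen _ hu'])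
  simp [h1, h2]

theorem stmt3 (n : ℕ) (hn : 3 ≤ n) :
    ((wordSet n).ncard : ℤ) =
      2 * (wordSet (n - 1)).ncard * (wordSet (n - 2)).ncard -
        ((wordSet (n - 2)).ncard : ℤ) ^ 2 * (wordSet (n - 3)).ncard := by
  obtain ⟨m, rfl⟩ : ∃ m, n = m + 3 := ⟨n - 3, by omega⟩
  have h1 : m + 3 - 1 = m + 2 := rfl
  have h2 : m + 3 - 2 = m + 1 := rfl
  have h3 : m + 3 - 3 = m := rfl
  rw [h1, h2, h3]
  have hW : wordSet (m+3) =
      cat (wordSet (m+2)) (wordSet (m+1)) ∪ cat (wordSet (m+1)) (wordSet (m+2)) := rfl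
  have hfin1 := finite_wordSet (m+1)
  have hfin2 := finite_wordSet (m+2)
  have hfin0 := finite_wordSet m
  have hcat12 : (cat (wordSet (m+2)) (wordSet (m+1))).Finite :=
    Set.Finite.image2 _ hfin2 hfin1
  have hcat21 : (cat (wordSet (m+1)) (wordSet (m+2))).Finite :=
    Set.Finite.image2 _ hfin1 hfin2
  have hcatmid : (cat (wordSet (m+1)) (wordSet m)).Finite :=
    Set.Finite.image2 _ hfin1 hfin0
  have key := Set.ncard_union_add_ncard_inter
    (cat (wordSet (m+2)) (wordSet (m+1))) (cat (wordSet (m+1)) (wordSet (m+2)))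
    hcat12 hcat21
  rw [inter_eq m] at key
  have e1 : (cat (wordSet (m+2)) (wordSet (m+1))).ncard =
      (wordSet (m+2)).ncard * (wordSet (m+1)).ncard :=
    ncard_cat _ _ hfin2 hfin1 (Nat.fib (m+2)) (length_of_mem _)
  have e2 : (cat (wordSet (m+1)) (wordSet (m+2))).ncard =
      (wordSet (m+1)).ncard * (wordSet (m+2)).ncard :=
    ncard_cat _ _ hfin1 hfin2 (Nat.fib (m+1)) (length_of_mem _)
  have e3 : (cat (cat (wordSet (m+1)) (wordSet m)) (wordSet (m+1))).ncard =
      ((wordSet (m+1)).ncard * (wordSet m).ncard) * (wordSet (m+1)).ncard := by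
    rw [ncard_cat _ _ hcatmid hfin1
      (Nat.fib (m+1) + Nat.fib m) ?_,
      ncard_cat _ _ hfin1 hfin0 (Nat.fib (m+1)) (length_of_mem _)]
    rintro u ⟨a, ha, b, hb, rfl⟩
    rw [List.length_append, length_of_mem _ _ ha, length_of_mem _ _ hb]
  rw [e1, e2, e3] at key
  rw [hW]
  have : ((cat (wordSet (m+2)) (wordSet (m+1)) ∪
      cat (wordSet (m+1)) (wordSet (m+2))).ncard : ℤ) +
      ((wordSet (m+1)).ncard * (wordSet m).ncard) * (wordSet (m+1)).ncard =
      (wordSet (m+2)).ncard * (wordSet (m+1)).ncard +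
      (wordSet (m+1)).ncard * (wordSet (m+2)).ncard := by exact_mod_cast key
  push_cast at this ⊢
  linear_combination this
end

section
/- If a sequence b_n of positive integers satisfies b_1 = b_2 = 1 and (n−2)b_n = (n−1)b_{n-1}b_{n-2} for n ≥ 3, then b_n = (n−1)∏_{i=2}^{n−1}(n−i)^{f_{i−2}} for n ≥ 3, where f_k are Fibonacci numbers with f_0 = 0, f_1 = 1. -/
def Qa (m : ℕ) : ℕ := ∏ j ∈ Finset.range m, (j + 1) ^ Nat.fib (m - j)

lemma Qrec (k : ℕ) : Qa (k + 2) = (k + 2) * Qa (k + 1) * Qa k := by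
  unfold Qa
  rw [Finset.prod_range_succ]
  have h1 : ∀ j ∈ Finset.range (k + 1),
      (j + 1) ^ Nat.fib (k + 2 - j) =
      (j + 1) ^ Nat.fib (k + 1 - j) * (j + 1) ^ Nat.fib (k - j) := by
    intro j hj
    rw [Finset.mem_range] at hj
    have e1 : k + 2 - j = (k - j) + 2 := by omega
    have e2 : k + 1 - j = (k - j) + 1 := by omega
    rw [e1, e2, Nat.fib_add_two, pow_add]; ring
  rw [Finset.prod_congr rfl h1, Finset.prod_mul_distrib]
  have e3 : k + 2 - (k + 1) = 1 := by omega
  have h2 : ∏ j ∈ Finset.range (k + 1), (j + 1) ^ Nat.fib (k - j) =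
      ∏ j ∈ Finset.range k, (j + 1) ^ Nat.fib (k - j) := by
    rw [Finset.prod_range_succ]
    simp
  rw [h2, e3]
  simp [Nat.fib_one]
  ring

lemma Qprod (m : ℕ) :
    ∏ i ∈ Finset.Icc 2 (m + 2), (m + 3 - i) ^ Nat.fib (i - 2) = Qa m := by
  have h0 : Finset.Icc 2 (m + 2) = insert 2 (Finset.Icc 3 (m + 2)) := by
    ext x; simp [Finset.mem_Icc, Finset.mem_insert]; omega
  rw [h0, Finset.prod_insert (by simp [Finset.mem_Icc])]
  simp only [Nat.sub_self, Nat.fib_zero, pow_zero, one_mul]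
  have hIco : Finset.Icc 3 (m + 2) = Finset.Ico 3 (m + 3) := by
    ext x; simp [Finset.mem_Icc, Finset.mem_Ico]; omega
  rw [hIco, Finset.prod_Ico_eq_prod_range]
  have e : m + 3 - 3 = m := by omega
  rw [e]
  have h1 : ∀ j ∈ Finset.range m,
      (m + 3 - (3 + j)) ^ Nat.fib (3 + j - 2) = (m - j) ^ Nat.fib (j + 1) := by
    intro j hj
    have e1 : m + 3 - (3 + j) = m - j := by omega
    have e2 : 3 + j - 2 = j + 1 := by omega
    rw [e1, e2]
  rw [Finset.prod_congr rfl h1]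
  unfold Qa
  rw [← Finset.prod_range_reflect]
  apply Finset.prod_congr rfl
  intro j hj
  rw [Finset.mem_range] at hj
  have e1 : m - 1 - j + 1 = m - j := by omega
  have e2 : m - (m - 1 - j) = j + 1 := by omega
  rw [e1, e2]

theorem stmt7 (b : ℕ → ℕ) (hpos : ∀ n, 0 < b n) (h1 : b 1 = 1) (h2 : b 2 = 1)
    (hrec : ∀ n, 3 ≤ n → (n - 2) * b n = (n - 1) * b (n - 1) * b (n - 2)) :
    ∀ n, 3 ≤ n → b n = (n - 1) * ∏ i ∈ Finset.Icc 2 (n - 1), (n - i) ^ Nat.fib (i - 2) := by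
  have hb3 : b 3 = 2 := by
    have h := hrec 3 (by norm_num)
    norm_num [h1, h2] at h
    omega
  have hb4 : b 4 = 3 := by
    have h := hrec 4 (by norm_num)
    norm_num [hb3, h2] at h
    omega
  have key : ∀ m, b (m + 3) = (m + 2) * Qa m := by
    intro m
    induction m using Nat.strong_induction_on with
    | _ m ih =>
      rcases m with _ | _ | k
      · simp [Qa, hb3]
      · simp [Qa, hb4]
      · have ih1 : b (k + 4) = (k + 3) * Qa (k + 1) := ih (k + 1) (by omega)
        have ih0 : b (k + 3) = (k + 2) * Qa k := ih k (by omega)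
        have h := hrec (k + 5) (by omega)
        simp only [show k + 5 - 2 = k + 3 from by omega,
          show k + 5 - 1 = k + 4 from by omega] at h
        have goal5 : b (k + 5) = (k + 4) * Qa (k + 2) := by
          apply Nat.eq_of_mul_eq_mul_left (show 0 < k + 3 by omega)
          rw [h, ih1, ih0, Qrec]
          ring
        show b (k + 5) = (k + 4) * Qa (k + 2)
        exact goal5
  intro n hn
  obtain ⟨m, rfl⟩ : ∃ m, n = m + 3 := ⟨n - 3, by omega⟩
  have e1 : m + 3 - 1 = m + 2 := by omega
  rw [e1, Qprod, key m]
end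

section
/- For all n ≥ 3 and k ≥ 0, the set of prefixes of length f_n − 1 of elements of A_n equals the set of prefixes of length f_n − 1 of elements of A_{n+k}. -/
lemma wordSet_nonempty : ∀ n, 1 ≤ n → (wordSet n).Nonempty := by
  intro n
  induction n using Nat.strong_induction_on with
  | _ n ih =>
    match n with
    | 0 => intro h; omega
    | 1 => exact fun _ => ⟨[false], rfl⟩
    | 2 => exact fun _ => ⟨[true], rfl⟩
    | (n+3) =>
      intro _
      obtain ⟨u, hu⟩ := ih (n+2) (by omega) (by omega)
      obtain ⟨v, hv⟩ := ih (n+1) (by omega) (by omega)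
      exact ⟨u ++ v, Or.inl ⟨u, hu, v, hv, rfl⟩⟩

lemma wordSet_length : ∀ n, 1 ≤ n → ∀ w ∈ wordSet n, w.length = Nat.fib n := by
  intro n
  induction n using Nat.strong_induction_on with
  | _ n ih =>
    match n with
    | 0 => intro h; omega
    | 1 => rintro _ w rfl; rfl
    | 2 => rintro _ w rfl; rfl
    | (n+3) =>
      have hfib : Nat.fib (n+3) = Nat.fib (n+1) + Nat.fib (n+2) :=
        Nat.fib_add_two (n := n+1)
      rintro _ w (⟨u, hu, v, hv, rfl⟩ | ⟨u, hu, v, hv, rfl⟩)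
      · have h1 := ih (n+2) (by omega) (by omega) _ hu
        have h2 := ih (n+1) (by omega) (by omega) _ hv
        rw [List.length_append]; omega
      · have h1 := ih (n+1) (by omega) (by omega) _ hu
        have h2 := ih (n+2) (by omega) (by omega) _ hv
        rw [List.length_append]; omega

lemma take_image_of_le {a b : ℕ} (h : a ≤ b) (S : Set (List Bool)) :
    (List.take a) '' ((List.take b) '' S) = (List.take a) '' S := by
  rw [Set.image_image]
  apply Set.image_congr'
  intro w
  rw [List.take_take, min_eq_left h]

lemma take_zero_image {S : Set (List Bool)} (h : S.Nonempty) :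
    (List.take 0) '' S = {([] : List Bool)} := by
  have e : (List.take 0 : List Bool → List Bool) = fun _ => [] := by
    funext w; simp
  rw [e, Set.Nonempty.image_const h]

lemma prefEq : ∀ n, 1 ≤ n →
    (List.take (Nat.fib n - 1)) '' wordSet (n + 1)
      = (List.take (Nat.fib n - 1)) '' wordSet n := by
  intro n
  induction n using Nat.strong_induction_on with
  | _ n ih =>
    match n with
    | 0 => intro h; omega
    | 1 =>
      intro _
      exact (take_zero_image (wordSet_nonempty 2 (by omega))).trans
        (take_zero_image (wordSet_nonempty 1 (by omega))).symm
    | 2 =>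
      intro _
      exact (take_zero_image (wordSet_nonempty 3 (by omega))).trans
        (take_zero_image (wordSet_nonempty 2 (by omega))).symm
    | (n+3) =>
      intro _
      have ha : 1 ≤ Nat.fib (n+1) := Nat.fib_pos.2 (by omega)
      have hb : 1 ≤ Nat.fib (n+2) := Nat.fib_pos.2 (by omega)
      have hfib : Nat.fib (n+3) = Nat.fib (n+1) + Nat.fib (n+2) :=
        Nat.fib_add_two (n := n+1)
      have D : (List.take (Nat.fib (n+1) - 1)) '' wordSet (n+3)
          = (List.take (Nat.fib (n+1) - 1)) '' wordSet (n+1) := by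
        have h1 : Nat.fib (n+1) - 1 ≤ Nat.fib (n+2) - 1 :=
          Nat.sub_le_sub_right (Nat.fib_mono (by omega)) 1
        calc (List.take (Nat.fib (n+1) - 1)) '' wordSet (n+3)
            = (List.take (Nat.fib (n+1) - 1)) ''
                ((List.take (Nat.fib (n+2) - 1)) '' wordSet (n+3)) :=
              (take_image_of_le h1 _).symm
          _ = (List.take (Nat.fib (n+1) - 1)) ''
                ((List.take (Nat.fib (n+2) - 1)) '' wordSet (n+2)) := by
              rw [ih (n+2) (by omega) (by omega)]
          _ = (List.take (Nat.fib (n+1) - 1)) '' wordSet (n+2) :=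
              take_image_of_le h1 _
          _ = (List.take (Nat.fib (n+1) - 1)) '' wordSet (n+1) :=
              ih (n+1) (by omega) (by omega)
      apply Set.Subset.antisymm
      · rintro x ⟨w, (⟨u, hu, v, hv, rfl⟩ | ⟨v, hv, u, hu, rfl⟩), rfl⟩
        · -- u ∈ A_{n+3}, v ∈ A_{n+2}
          have hul : u.length = Nat.fib (n+3) :=
            wordSet_length _ (by omega) _ (by exact hu)
          refine ⟨u, by exact hu, ?_⟩
          rw [List.take_append_of_le_length (by omega)]
        · -- v ∈ A_{n+2}, u ∈ A_{n+3}
          have hvl : v.length = Nat.fib (n+2) :=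
            wordSet_length _ (by omega) _ (by exact hv)
          have hD : List.take (Nat.fib (n+1) - 1) u ∈
              (List.take (Nat.fib (n+1) - 1)) '' wordSet (n+1) := by
            rw [← D]; exact ⟨u, by exact hu, rfl⟩
          obtain ⟨w, hw, hweq⟩ := hD
          refine ⟨v ++ w, Or.inl ⟨v, by exact hv, w, hw, rfl⟩, ?_⟩
          have h2 : Nat.fib (n+3) - 1 - Nat.fib (n+2) = Nat.fib (n+1) - 1 := by omega
          rw [List.take_append, List.take_append,
            hvl, h2, hweq]
      · rintro x ⟨u, hu, rfl⟩
        obtain ⟨v, hv⟩ := wordSet_nonempty (n+2) (by omega)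
        have hul : u.length = Nat.fib (n+3) := wordSet_length _ (by omega) _ hu
        refine ⟨u ++ v, Or.inl ⟨u, by exact hu, v, by exact hv, rfl⟩, ?_⟩
        rw [List.take_append_of_le_length (by omega)]

theorem stmt8 (n k : ℕ) (hn : 3 ≤ n) :
    (fun w : List Bool => w.take (Nat.fib n - 1)) '' wordSet n =
      (fun w : List Bool => w.take (Nat.fib n - 1)) '' wordSet (n + k) := by
  induction k with
  | zero => rfl
  | succ k ihk =>
    have h1 : Nat.fib n - 1 ≤ Nat.fib (n+k) - 1 :=
      Nat.sub_le_sub_right (Nat.fib_mono (by omega)) 1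
    calc (fun w : List Bool => w.take (Nat.fib n - 1)) '' wordSet n
        = (List.take (Nat.fib n - 1)) '' wordSet (n + k) := ihk
      _ = (List.take (Nat.fib n - 1)) ''
            ((List.take (Nat.fib (n+k) - 1)) '' wordSet (n + k)) :=
          (take_image_of_le h1 _).symm
      _ = (List.take (Nat.fib n - 1)) ''
            ((List.take (Nat.fib (n+k) - 1)) '' wordSet (n + k + 1)) := by
          rw [prefEq (n+k) (by omega)]
      _ = (List.take (Nat.fib n - 1)) '' wordSet (n + (k+1)) := by
          rw [take_image_of_le h1]; rfl
end

section
/- The sequence n ↦ log|A_n| / f_n converges as n → ∞. -/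
/-! ### Auxiliary development -/

def wordFinset : ℕ → Finset (List Bool)
  | 0 => ∅
  | 1 => {[false]}
  | 2 => {[true]}
  | (n + 3) => Finset.image₂ (· ++ ·) (wordFinset (n + 2)) (wordFinset (n + 1)) ∪
      Finset.image₂ (· ++ ·) (wordFinset (n + 1)) (wordFinset (n + 2))

lemma two_step {P : ℕ → Prop} (h0 : P 0) (h1 : P 1) (h2 : P 2)
    (hs : ∀ n, P (n + 1) → P (n + 2) → P (n + 3)) : ∀ n, P n := by
  intro n
  induction n using Nat.strong_induction_on with
  | _ n ih =>
    match n with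
    | 0 => exact h0
    | 1 => exact h1
    | 2 => exact h2
    | (m + 3) => exact hs m (ih (m + 1) (by omega)) (ih (m + 2) (by omega))

lemma wordSet_eq : ∀ n, wordSet n = ↑(wordFinset n) := by
  refine two_step ?_ ?_ ?_ ?_
  · simp [wordSet, wordFinset]
  · simp [wordSet, wordFinset]
  · simp [wordSet, wordFinset]
  · intro n ih1 ih2
    show wordSet (n + 3) = _
    rw [wordSet, ih1, ih2]
    show _ = ((wordFinset (n + 3) : Finset (List Bool)) : Set (List Bool))
    rw [wordFinset]
    push_cast
    rfl

lemma word_len : ∀ n, ∀ w ∈ wordFinset n, w.length = Nat.fib n := by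
  refine two_step ?_ ?_ ?_ ?_
  · simp [wordFinset]
  · simp [wordFinset]
  · simp [wordFinset]
  · intro n ih1 ih2 w hw
    rw [wordFinset, Finset.mem_union, Finset.mem_image₂, Finset.mem_image₂] at hw
    have hfib : Nat.fib (n + 3) = Nat.fib (n + 1) + Nat.fib (n + 2) := by
      rw [show n + 3 = (n + 1) + 2 from rfl, Nat.fib_add_two]
    rcases hw with ⟨u, hu, v, hv, rfl⟩ | ⟨u, hu, v, hv, rfl⟩
    · rw [List.length_append, ih2 _ hu, ih1 _ hv]; omega
    · rw [List.length_append, ih1 _ hu, ih2 _ hv]; omega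

lemma card_pos : ∀ n, 1 ≤ n → 1 ≤ (wordFinset n).card := by
  refine two_step ?_ ?_ ?_ ?_
  · omega
  · intro _; simp [wordFinset]
  · intro _; simp [wordFinset]
  · intro n ih1 ih2 _
    rw [wordFinset]
    refine le_trans ?_ (Finset.card_le_card Finset.subset_union_left)
    have hne : (Finset.image₂ (· ++ ·) (wordFinset (n + 2)) (wordFinset (n + 1))).Nonempty := by
      apply Finset.Nonempty.image₂ <;> rw [← Finset.card_pos]
      · exact ih2 (by omega)
      · exact ih1 (by omega)
    exact hne.card_pos

lemma card_upper (n : ℕ) : (wordFinset (n + 3)).card ≤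
    2 * ((wordFinset (n + 2)).card * (wordFinset (n + 1)).card) := by
  rw [wordFinset]
  refine (Finset.card_union_le _ _).trans ?_
  have h1 := Finset.card_image₂_le (· ++ ·) (wordFinset (n + 2)) (wordFinset (n + 1))
  have h2 := Finset.card_image₂_le (· ++ ·) (wordFinset (n + 1)) (wordFinset (n + 2))
  have hc : (wordFinset (n + 1)).card * (wordFinset (n + 2)).card =
      (wordFinset (n + 2)).card * (wordFinset (n + 1)).card := Nat.mul_comm _ _
  omega

lemma card_lower (n : ℕ) : (wordFinset (n + 2)).card * (wordFinset (n + 1)).card ≤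
    (wordFinset (n + 3)).card := by
  rw [wordFinset]
  refine le_trans ?_ (Finset.card_le_card Finset.subset_union_left)
  rw [Finset.card_image₂_iff.mpr]
  rintro ⟨u, v⟩ huv ⟨u', v'⟩ huv' h
  simp only [Set.mem_prod, Finset.mem_coe] at huv huv'
  have hl : u.length = u'.length := by
    rw [word_len _ u huv.1, word_len _ u' huv'.1]
  obtain ⟨h1, h2⟩ := List.append_inj h hl
  exact Prod.ext h1 h2

/-- `A n = log |Aₙ|`. -/
noncomputable def Aw (n : ℕ) : ℝ := Real.log ((wordFinset n).card)

lemma eps_bounds (n : ℕ) : Aw (n + 2) + Aw (n + 1) ≤ Aw (n + 3) ∧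
    Aw (n + 3) ≤ Aw (n + 2) + Aw (n + 1) + Real.log 2 := by
  have h1 : (1 : ℝ) ≤ ((wordFinset (n + 1)).card : ℝ) := by
    exact_mod_cast card_pos (n + 1) (by omega)
  have h2 : (1 : ℝ) ≤ ((wordFinset (n + 2)).card : ℝ) := by
    exact_mod_cast card_pos (n + 2) (by omega)
  have h3 : (1 : ℝ) ≤ ((wordFinset (n + 3)).card : ℝ) := by
    exact_mod_cast card_pos (n + 3) (by omega)
  have hlo : ((wordFinset (n + 2)).card : ℝ) * ((wordFinset (n + 1)).card : ℝ) ≤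
      ((wordFinset (n + 3)).card : ℝ) := by exact_mod_cast card_lower n
  have hhi : ((wordFinset (n + 3)).card : ℝ) ≤
      2 * (((wordFinset (n + 2)).card : ℝ) * ((wordFinset (n + 1)).card : ℝ)) := by
    exact_mod_cast card_upper n
  constructor
  · have := Real.log_le_log (by positivity) hlo
    rwa [Real.log_mul (by positivity) (by positivity)] at this
  · have := Real.log_le_log (by positivity) hhi
    rw [Real.log_mul (by norm_num) (by positivity),
      Real.log_mul (by positivity) (by positivity)] at this
    unfold Aw
    linarith

/-- `d n = fₙ · A(n+1) − fₙ₊₁ · A n`. -/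
noncomputable def dw (n : ℕ) : ℝ := (Nat.fib n : ℝ) * Aw (n + 1) - (Nat.fib (n + 1) : ℝ) * Aw n

lemma dw_bound : ∀ m, |dw (m + 1)| ≤ (Nat.fib (m + 3) : ℝ) * Real.log 2 := by
  intro m
  induction m with
  | zero =>
    have hA1 : Aw 1 = 0 := by simp [Aw, wordFinset]
    have hA2 : Aw 2 = 0 := by simp [Aw, wordFinset]
    have hz : dw 1 = 0 := by simp [dw, hA1, hA2]
    rw [hz, abs_zero]
    positivity
  | succ m ih =>
    obtain ⟨hlo, hhi⟩ := eps_bounds m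
    have hrec : dw (m + 2) = -dw (m + 1) +
        (Nat.fib (m + 2) : ℝ) * (Aw (m + 3) - Aw (m + 2) - Aw (m + 1)) := by
      have hf : (Nat.fib (m + 3) : ℝ) = (Nat.fib (m + 2) : ℝ) + (Nat.fib (m + 1) : ℝ) := by
        rw [Nat.fib_add_two]; push_cast; ring
      unfold dw
      rw [hf]
      ring
    have hfib2 : (0 : ℝ) ≤ (Nat.fib (m + 2) : ℝ) := by positivity
    have hf4 : (Nat.fib (m + 4) : ℝ) = (Nat.fib (m + 3) : ℝ) + (Nat.fib (m + 2) : ℝ) := by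
      rw [show m + 4 = (m + 2) + 2 from rfl, Nat.fib_add_two]; push_cast; ring
    have hd := abs_le.mp ih
    rw [abs_le]
    constructor
    · rw [hrec, hf4]
      nlinarith [mul_le_mul_of_nonneg_left (sub_nonneg.mpr hlo) hfib2]
    · rw [hrec, hf4]
      nlinarith [mul_le_mul_of_nonneg_left (by linarith : Aw (m + 3) - Aw (m + 2) - Aw (m + 1) ≤ Real.log 2) hfib2]

lemma sqrt2_le_fib : ∀ m, Real.sqrt 2 ^ m ≤ (Nat.fib (m + 2) : ℝ) := by
  have hs1 : (1 : ℝ) ≤ Real.sqrt 2 := by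
    rw [show (1 : ℝ) = Real.sqrt 1 by simp]
    exact Real.sqrt_le_sqrt (by norm_num)
  have hs2 : Real.sqrt 2 ^ 2 = 2 := Real.sq_sqrt (by norm_num)
  refine two_step ?_ ?_ ?_ ?_
  · simp
  · have h3 : (Nat.fib 3 : ℝ) = 2 := by norm_num [Nat.fib]
    rw [pow_one, h3]
    nlinarith [Real.sqrt_nonneg 2]
  · have h4 : (Nat.fib 4 : ℝ) = 3 := by norm_num [Nat.fib]
    rw [hs2, h4]; norm_num
  · intro m ih1 ih2
    have hf : (Nat.fib (m + 5) : ℝ) = (Nat.fib (m + 4) : ℝ) + (Nat.fib (m + 3) : ℝ) := by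
      rw [show m + 5 = (m + 3) + 2 from rfl, Nat.fib_add_two]; push_cast; ring
    have hmono : Real.sqrt 2 ^ (m + 1) ≤ Real.sqrt 2 ^ (m + 2) :=
      pow_le_pow_right₀ hs1 (by omega)
    have key : Real.sqrt 2 ^ (m + 3) = Real.sqrt 2 ^ (m + 1) * 2 := by
      rw [show m + 3 = (m + 1) + 2 from rfl, pow_add, hs2]
    rw [show m + 3 + 2 = m + 5 from rfl, hf, key]
    nlinarith

theorem stmt15 :
    ∃ L : ℝ, Filter.Tendsto (fun n : ℕ => Real.log (wordSet n).ncard / (Nat.fib n : ℝ))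
      Filter.atTop (nhds L) := by
  set b : ℕ → ℝ := fun n => Aw n / (Nat.fib n : ℝ) with hb
  have hfun : (fun n : ℕ => Real.log (wordSet n).ncard / (Nat.fib n : ℝ)) = b := by
    funext n
    simp [hb, Aw, wordSet_eq, Set.ncard_coe_finset]
  rw [hfun]
  -- the shifted sequence is Cauchy via a geometric bound
  have hdist : ∀ m : ℕ, dist (b (m + 3)) (b (m + 3 + 1)) ≤
      (Real.sqrt 2 * Real.log 2) * ((Real.sqrt 2)⁻¹) ^ m := by
    intro m
    have hf3 : (0 : ℝ) < (Nat.fib (m + 3) : ℝ) := by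
      exact_mod_cast Nat.fib_pos.mpr (by omega)
    have hf4 : (0 : ℝ) < (Nat.fib (m + 4) : ℝ) := by
      exact_mod_cast Nat.fib_pos.mpr (by omega)
    have hdiff : b (m + 3 + 1) - b (m + 3) =
        dw (m + 3) / ((Nat.fib (m + 3) : ℝ) * (Nat.fib (m + 4) : ℝ)) := by
      simp only [hb, dw]
      field_simp
    rw [dist_eq_norm, Real.norm_eq_abs, ← neg_sub, abs_neg, hdiff, abs_div,
      abs_of_pos (mul_pos hf3 hf4)]
    have hd := dw_bound (m + 2)
    have hf5 : (Nat.fib (m + 5) : ℝ) ≤ 2 * (Nat.fib (m + 4) : ℝ) := by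
      have e := Nat.fib_add_two (n := m + 3)
      simp only [show m + 3 + 2 = m + 5 from rfl, show m + 3 + 1 = m + 4 from rfl] at e
      have hle := Nat.fib_le_fib_succ (n := m + 3)
      simp only [show m + 3 + 1 = m + 4 from rfl] at hle
      have : Nat.fib (m + 5) ≤ 2 * Nat.fib (m + 4) := by omega
      exact_mod_cast this
    have hsq : Real.sqrt 2 ^ (m + 1) ≤ (Nat.fib (m + 3) : ℝ) := sqrt2_le_fib (m + 1)
    have hlog : (0 : ℝ) ≤ Real.log 2 := Real.log_nonneg (by norm_num)
    have hs0 : (0 : ℝ) < Real.sqrt 2 := Real.sqrt_pos.mpr (by norm_num)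
    have hs2 : Real.sqrt 2 ^ 2 = 2 := Real.sq_sqrt (by norm_num)
    -- |dw (m+3)| / (f(m+3) f(m+4)) ≤ f(m+5) log2 / (f(m+3) f(m+4)) ≤ 2 log2 / f(m+3)
    have step1 : |dw (m + 3)| / ((Nat.fib (m + 3) : ℝ) * (Nat.fib (m + 4) : ℝ)) ≤
        2 * Real.log 2 / (Nat.fib (m + 3) : ℝ) := by
      rw [div_le_div_iff₀ (by positivity) hf3]
      calc |dw (m + 3)| * (Nat.fib (m + 3) : ℝ)
          ≤ ((Nat.fib (m + 5) : ℝ) * Real.log 2) * (Nat.fib (m + 3) : ℝ) := by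
            exact mul_le_mul_of_nonneg_right hd hf3.le
        _ ≤ (2 * (Nat.fib (m + 4) : ℝ) * Real.log 2) * (Nat.fib (m + 3) : ℝ) := by
            have := mul_le_mul_of_nonneg_right
              (mul_le_mul_of_nonneg_right hf5 hlog) hf3.le
            nlinarith [this]
        _ = 2 * Real.log 2 * ((Nat.fib (m + 3) : ℝ) * (Nat.fib (m + 4) : ℝ)) := by ring
    refine step1.trans ?_
    have hpow : (0 : ℝ) < Real.sqrt 2 ^ (m + 1) := by positivity
    rw [div_le_iff₀ hf3]
    have key : ((Real.sqrt 2 * Real.log 2) * ((Real.sqrt 2)⁻¹) ^ m) * Real.sqrt 2 ^ (m + 1) =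
        2 * Real.log 2 := by
      have e : ((Real.sqrt 2 * Real.log 2) * ((Real.sqrt 2)⁻¹) ^ m) * Real.sqrt 2 ^ (m + 1) =
          Real.log 2 * (Real.sqrt 2 ^ 2 * (((Real.sqrt 2)⁻¹) * Real.sqrt 2) ^ m) := by
        rw [mul_pow]; ring
      rw [e, inv_mul_cancel₀ hs0.ne', one_pow, hs2]
      ring
    calc 2 * Real.log 2 = ((Real.sqrt 2 * Real.log 2) * ((Real.sqrt 2)⁻¹) ^ m) *
          Real.sqrt 2 ^ (m + 1) := key.symm
      _ ≤ ((Real.sqrt 2 * Real.log 2) * ((Real.sqrt 2)⁻¹) ^ m) * (Nat.fib (m + 3) : ℝ) := by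
          refine mul_le_mul_of_nonneg_left hsq ?_
          positivity
  have hcauchy : CauchySeq (fun m : ℕ => b (m + 3)) := by
    refine cauchySeq_of_le_geometric ((Real.sqrt 2)⁻¹) (Real.sqrt 2 * Real.log 2) ?_ hdist
    have h1 : (1 : ℝ) < Real.sqrt 2 := by
      have := Real.sq_sqrt (by norm_num : (0:ℝ) ≤ 2)
      nlinarith [Real.sqrt_nonneg 2]
    rw [inv_lt_one_iff₀]
    right
    exact h1
  obtain ⟨L, hL⟩ := cauchySeq_tendsto_of_complete hcauchy
  exact ⟨L, (Filter.tendsto_add_atTop_iff_nat 3).mp hL⟩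
end
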